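/- Let 𝔽 be ℝ or ℂ, let 𝒰 be a nonprincipal ultrafilter on ℕ, and let X be an infinite-dimensional normed space over 𝔽 such that the dual X* contains an isometric copy of ℓ¹, i.e. there is a sequence (e_n*) in X* with ‖Σ_{n≤m} r_n e_n*‖ = Σ_{n≤m}|r_n| for every m and all scalars r_1,…,r_m ∈ 𝔽. Then the canonical linear isometry j : (X*)^𝒰 → (X^𝒰)* is not surjective. -/

import Mathlib

/-!
Ultrapowers of normed spaces along a nonprincipal ultrafilter `𝒰` on `ℕ`.

`BoundedSeq X = ℓ∞(X)` is the normed space of bounded sequences in `X` with the sup norm,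
`nullSeq 𝕜 𝒰 X = c_𝒰(X)` is the subspace of sequences whose norms tend to `0` along `𝒰`,
and `Ultrapower 𝕜 𝒰 X = ℓ∞(X)/c_𝒰(X)` is the ultrapower, with quotient map `up 𝕜 𝒰`.

The canonical linear isometry `j : (X*)^𝒰 → (X^𝒰)*` sends the class of a (bounded)
sequence of functionals `(f_n)` to the functional `(x_n)^𝒰 ↦ lim_{n→𝒰} f_n(x_n)`; hence a
functional `φ` on `X^𝒰` lies in the image of `j` if and only if there is a bounded
sequence `(f_n)` in `X*` with `φ((x_n)^𝒰) = lim_{n→𝒰} f_n(x_n)` for every bounded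
sequence `(x_n)`.  This is the predicate `InCanonicalImage` below.
-/

open Filter Topology
open scoped ENNReal

noncomputable section

/-- The normed space `ℓ∞(X)` of bounded sequences in `X`, with the sup norm. -/
abbrev BoundedSeq (X : Type*) [NormedAddCommGroup X] := lp (fun _ : ℕ => X) ∞

variable (𝕜 : Type*) [NontriviallyNormedField 𝕜]

/-- `c_𝒰(X)`: the subspace of bounded sequences tending to zero in norm along `𝒰`. -/
def nullSeq (𝒰 : Ultrafilter ℕ) (X : Type*) [NormedAddCommGroup X] [NormedSpace 𝕜 X] :
    Submodule 𝕜 (BoundedSeq X) where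
  carrier := {f | Tendsto (fun n => ‖f n‖) 𝒰 (𝓝 0)}
  zero_mem' := by simp [tendsto_const_nhds]
  add_mem' := by
    intro f g hf hg
    have h := hf.add hg
    rw [add_zero] at h
    exact squeeze_zero (fun n => norm_nonneg _) (fun n => norm_add_le _ _) h
  smul_mem' := by
    intro c f hf
    have h := hf.const_mul ‖c‖
    rw [mul_zero] at h
    exact squeeze_zero (fun n => norm_nonneg _) (fun n => by simp [norm_smul]) h

/-- The ultrapower `X^𝒰 = ℓ∞(X)/c_𝒰(X)`. -/
abbrev Ultrapower (𝒰 : Ultrafilter ℕ) (X : Type*) [NormedAddCommGroup X] [NormedSpace 𝕜 X] :=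
  BoundedSeq X ⧸ nullSeq 𝕜 𝒰 X

/-- The quotient map `ℓ∞(X) → X^𝒰`, `(x_n) ↦ (x_n)^𝒰`. -/
def up (𝒰 : Ultrafilter ℕ) {X : Type*} [NormedAddCommGroup X] [NormedSpace 𝕜 X]
    (f : BoundedSeq X) : Ultrapower 𝕜 𝒰 X := Submodule.Quotient.mk f

/-- `φ : (X^𝒰)*` lies in the image of the canonical linear isometry
`j : (X*)^𝒰 → (X^𝒰)*` iff it is induced by a bounded sequence of functionals on `X`. -/
def InCanonicalImage (𝒰 : Ultrafilter ℕ) {X : Type*} [NormedAddCommGroup X] [NormedSpace 𝕜 X]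
    (φ : StrongDual 𝕜 (Ultrapower 𝕜 𝒰 X)) : Prop :=
  ∃ f : ℕ → StrongDual 𝕜 X, (∃ C : ℝ, ∀ n, ‖f n‖ ≤ C) ∧
    ∀ x : BoundedSeq X, Tendsto (fun n => f n (x n)) 𝒰 (𝓝 (φ (up 𝕜 𝒰 x)))

namespace UltraAux

variable {𝕜 : Type*} [RCLike 𝕜] (𝒰 : Ultrafilter ℕ)

open Classical in
/-- Limit along the ultrafilter, when it exists. -/
def limU (f : ℕ → 𝕜) : 𝕜 :=
  if h : ∃ c, Tendsto f (𝒰 : Filter ℕ) (𝓝 c) then h.choose else 0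

lemma tendsto_limU {f : ℕ → 𝕜} (h : ∃ c, Tendsto f (𝒰 : Filter ℕ) (𝓝 c)) :
    Tendsto f (𝒰 : Filter ℕ) (𝓝 (limU 𝒰 f)) := by
  rw [limU, dif_pos h]; exact h.choose_spec

lemma limU_eq {f : ℕ → 𝕜} {c : 𝕜} (h : Tendsto f (𝒰 : Filter ℕ) (𝓝 c)) : limU 𝒰 f = c :=
  tendsto_nhds_unique (tendsto_limU 𝒰 ⟨c, h⟩) h

lemma exists_limU {f : ℕ → 𝕜} {C : ℝ} (h : ∀ n, ‖f n‖ ≤ C) :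
    ∃ c, Tendsto f (𝒰 : Filter ℕ) (𝓝 c) := by
  have hcpt : IsCompact (Metric.closedBall (0 : 𝕜) C) := isCompact_closedBall _ _
  have hle : (𝒰.map f : Filter 𝕜) ≤ 𝓟 (Metric.closedBall 0 C) := by
    rw [Ultrafilter.coe_map, Filter.le_principal_iff, Filter.mem_map]
    filter_upwards with n
    simpa [Metric.mem_closedBall, dist_zero_right] using h n
  obtain ⟨c, _, hc⟩ := hcpt.ultrafilter_le_nhds (𝒰.map f) hle
  exact ⟨c, by rwa [Ultrafilter.coe_map] at hc⟩

lemma norm_limU_le {f : ℕ → 𝕜} {C : ℝ} (h : ∀ n, ‖f n‖ ≤ C) : ‖limU 𝒰 f‖ ≤ C :=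
  le_of_tendsto ((tendsto_limU 𝒰 (exists_limU 𝒰 h)).norm) (Filter.Eventually.of_forall h)

end UltraAux

namespace UltraAux

section Phi
variable {𝕜 : Type*} [RCLike 𝕜] {X : Type*} [NormedAddCommGroup X] [NormedSpace 𝕜 X]
  (𝒰 : Ultrafilter ℕ) (e : ℕ → StrongDual 𝕜 X)

lemma bound1 (hen : ∀ n, ‖e n‖ = 1) (x : BoundedSeq X) (n m : ℕ) : ‖e n (x m)‖ ≤ ‖x‖ := by
  have h1 := (e n).le_opNorm (x m)
  rw [hen n, one_mul] at h1
  exact h1.trans (lp.norm_apply_le_norm ENNReal.top_ne_zero x m)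

/-- The inner ultralimit `lim_{m→𝒰} e_n(x_m)`. -/
def innerLim (n : ℕ) (x : BoundedSeq X) : 𝕜 := limU 𝒰 fun m => e n (x m)

lemma innerLim_tendsto (hen : ∀ n, ‖e n‖ = 1) (n : ℕ) (x : BoundedSeq X) :
    Tendsto (fun m => e n (x m)) (𝒰 : Filter ℕ) (𝓝 (innerLim 𝒰 e n x)) :=
  tendsto_limU 𝒰 (exists_limU 𝒰 (bound1 e hen x n))

lemma innerLim_norm_le (hen : ∀ n, ‖e n‖ = 1) (n : ℕ) (x : BoundedSeq X) :
    ‖innerLim 𝒰 e n x‖ ≤ ‖x‖ :=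
  norm_limU_le 𝒰 (bound1 e hen x n)

variable (hen : ∀ n, ‖e n‖ = 1)

/-- The linear functional `x ↦ lim_{n→𝒰} lim_{m→𝒰} e_n(x_m)` on `ℓ∞(X)`. -/
def Lam : BoundedSeq X →ₗ[𝕜] 𝕜 where
  toFun x := limU 𝒰 fun n => innerLim 𝒰 e n x
  map_add' x y := by
    have hx : ∀ n, innerLim 𝒰 e n (x + y) = innerLim 𝒰 e n x + innerLim 𝒰 e n y := by
      intro n
      refine limU_eq 𝒰 (((innerLim_tendsto 𝒰 e hen n x).add (innerLim_tendsto 𝒰 e hen n y)).congr ?_)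
      intro m
      rw [lp.coeFn_add, Pi.add_apply, map_add]
    have h1 := (tendsto_limU 𝒰 (exists_limU 𝒰 fun n => innerLim_norm_le 𝒰 e hen n x)).add
      (tendsto_limU 𝒰 (exists_limU 𝒰 fun n => innerLim_norm_le 𝒰 e hen n y))
    refine limU_eq 𝒰 (h1.congr fun n => (hx n).symm)
  map_smul' c x := by
    have hx : ∀ n, innerLim 𝒰 e n (c • x) = c * innerLim 𝒰 e n x := by
      intro n
      refine limU_eq 𝒰 (((innerLim_tendsto 𝒰 e hen n x).const_mul c).congr ?_)
      intro m
      rw [lp.coeFn_smul, Pi.smul_apply, map_smul, smul_eq_mul]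
    have h1 := (tendsto_limU 𝒰 (exists_limU 𝒰 fun n => innerLim_norm_le 𝒰 e hen n x)).const_mul c
    simp only [RingHom.id_apply, smul_eq_mul]
    exact limU_eq 𝒰 (h1.congr fun n => (hx n).symm)

lemma norm_Lam_le (x : BoundedSeq X) : ‖Lam 𝒰 e hen x‖ ≤ ‖x‖ :=
  norm_limU_le 𝒰 fun n => innerLim_norm_le 𝒰 e hen n x

lemma Lam_ker : nullSeq 𝕜 𝒰 X ≤ LinearMap.ker (Lam 𝒰 e hen) := by
  intro x hx
  have hx' : Tendsto (fun m => ‖x m‖) (𝒰 : Filter ℕ) (𝓝 0) := hx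
  have hinner : ∀ n, innerLim 𝒰 e n x = 0 := by
    intro n
    refine limU_eq 𝒰 ?_
    rw [tendsto_zero_iff_norm_tendsto_zero]
    refine squeeze_zero (fun m => norm_nonneg _) (fun m => ?_) (by simpa [hen n] using hx')
    calc ‖e n (x m)‖ ≤ ‖e n‖ * ‖x m‖ := (e n).le_opNorm _
    _ = ‖x m‖ := by rw [hen n, one_mul]
  have : Lam 𝒰 e hen x = limU 𝒰 (fun _ : ℕ => (0 : 𝕜)) := by
    simp only [Lam, LinearMap.coe_mk, AddHom.coe_mk]
    congr 1
    exact funext hinner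
  rw [LinearMap.mem_ker, this, limU_eq 𝒰 tendsto_const_nhds]

/-- The functional `φ ∈ (X^𝒰)*`. -/
def phi : StrongDual 𝕜 (Ultrapower 𝕜 𝒰 X) :=
  LinearMap.mkContinuous ((nullSeq 𝕜 𝒰 X).liftQ (Lam 𝒰 e hen) (Lam_ker 𝒰 e hen)) 1 (by
    intro q
    rw [one_mul]
    refine le_of_forall_pos_le_add fun ε hε => ?_
    obtain ⟨x, hxq, hxn⟩ := Submodule.Quotient.norm_mk_lt q hε
    have h2 : (nullSeq 𝕜 𝒰 X).liftQ (Lam 𝒰 e hen) (Lam_ker 𝒰 e hen) q = Lam 𝒰 e hen x := by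
      rw [← hxq, Submodule.liftQ_apply]
    rw [h2]
    exact (norm_Lam_le 𝒰 e hen x).trans hxn.le)

lemma phi_up (x : BoundedSeq X) : phi 𝒰 e hen (up 𝕜 𝒰 x) = Lam 𝒰 e hen x := by
  rw [phi, up, LinearMap.mkContinuous_apply, Submodule.liftQ_apply]

/-- Elements of `ℓ∞(X)` from sequences bounded by 1. -/
def mkB (x : ℕ → X) (h : ∀ m, ‖x m‖ ≤ 1) : BoundedSeq X :=
  ⟨x, memℓp_infty ⟨1, by rintro r ⟨m, rfl⟩; exact h m⟩⟩

@[simp] lemma mkB_apply (x : ℕ → X) (h : ∀ m, ‖x m‖ ≤ 1) (m : ℕ) : (mkB x h) m = x m := rfl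

lemma phi_spec (x : ℕ → X) (hb : ∀ m, ‖x m‖ ≤ 1) (t : ℕ → 𝕜)
    (ht : ∀ n, Tendsto (fun m => e n (x m)) (𝒰 : Filter ℕ) (𝓝 (t n)))
    {c : 𝕜} (htc : Tendsto t (𝒰 : Filter ℕ) (𝓝 c)) :
    phi 𝒰 e hen (up 𝕜 𝒰 (mkB x hb)) = c := by
  rw [phi_up]
  have hin : ∀ n, innerLim 𝒰 e n (mkB x hb) = t n := fun n => limU_eq 𝒰 (ht n)
  have : Lam 𝒰 e hen (mkB x hb) = limU 𝒰 t := by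
    simp only [Lam, LinearMap.coe_mk, AddHom.coe_mk]
    congr 1
    exact funext hin
  rw [this, limU_eq 𝒰 htc]

end Phi
end UltraAux

namespace UltraAux
section Approx
variable {𝕜 : Type*} [RCLike 𝕜] {X : Type*} [NormedAddCommGroup X] [NormedSpace 𝕜 X]
  (e : ℕ → StrongDual 𝕜 X)
  (he : ∀ (m : ℕ) (r : ℕ → 𝕜),
    ‖∑ n ∈ Finset.range m, r n • e n‖ = ∑ n ∈ Finset.range m, ‖r n‖)

include he

lemma norm_e (k : ℕ) : ‖e k‖ = 1 := by
  have h := he (k + 1) (fun n => if n = k then (1 : 𝕜) else 0)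
  have h1 : (∑ n ∈ Finset.range (k + 1), (if n = k then (1 : 𝕜) else 0) • e n) = e k := by
    simp [ite_smul]
    rw [Finset.sum_eq_single_of_mem k (by simp) (fun b _ hb => by simp [hb]; exact zero_smul 𝕜 (e b))]
    simp
  have h2 : (∑ n ∈ Finset.range (k + 1), ‖if n = k then (1 : 𝕜) else 0‖) = 1 := by
    simp [apply_ite (norm : 𝕜 → ℝ)]
  rw [h1, h2] at h
  exact h

set_option maxHeartbeats 1000000 in
lemma approx_unimodular (m : ℕ) (σ : ℕ → 𝕜) (hσ : ∀ n < m, ‖σ n‖ = 1)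
    {ε : ℝ} (hε : 0 < ε) (hε1 : ε ≤ 1) :
    ∃ y : X, ‖y‖ ≤ 1 ∧ ∀ n < m, ‖e n y - σ n‖ ≤ ε := by
  rcases Nat.eq_zero_or_pos m with hm | hm
  · exact ⟨0, by simp, fun n hn => absurd hn (by omega)⟩
  have hm1 : (1 : ℝ) ≤ m := by exact_mod_cast hm
  set ε' : ℝ := ε ^ 2 / 2 with hε'def
  have hε'pos : 0 < ε' := by positivity
  have hε'le : ε' ≤ 1 / 2 := by nlinarith
  set F : StrongDual 𝕜 X := ∑ n ∈ Finset.range m, (starRingEnd 𝕜) (σ n) • e n with hF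
  have hFnorm : ‖F‖ = m := by
    rw [hF, he m]
    rw [Finset.sum_congr rfl fun n hn => by
      rw [RCLike.norm_conj, hσ n (Finset.mem_range.mp hn)]]
    simp
  have hnc : ¬ ‖F‖ ≤ (m : ℝ) - ε' := by rw [hFnorm]; linarith
  have h2 : ∃ x : X, ((m : ℝ) - ε') * ‖x‖ < ‖F x‖ := by
    by_contra hcon
    push_neg at hcon
    exact hnc (ContinuousLinearMap.opNorm_le_bound F (by linarith) hcon)
  obtain ⟨x, hx⟩ := h2
  have hx0 : x ≠ 0 := by
    rintro rfl
    simp only [norm_zero, mul_zero, map_zero] at hx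
    exact lt_irrefl 0 hx
  have hxnorm : (0 : ℝ) < ‖x‖ := norm_pos_iff.mpr hx0
  set y₀ : X := ((‖x‖ : 𝕜))⁻¹ • x with hy₀def
  have hy₀norm : ‖y₀‖ = 1 := by
    rw [hy₀def, norm_smul, norm_inv, RCLike.norm_ofReal, abs_of_nonneg (norm_nonneg x),
      inv_mul_cancel₀ (ne_of_gt hxnorm)]
  have hFy₀ : (m : ℝ) - ε' < ‖F y₀‖ := by
    rw [hy₀def, map_smul, norm_smul, norm_inv, RCLike.norm_ofReal,
      abs_of_nonneg (norm_nonneg x)]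
    calc (m : ℝ) - ε' < ‖F x‖ / ‖x‖ := (lt_div_iff₀ hxnorm).mpr hx
    _ = ‖x‖⁻¹ * ‖F x‖ := div_eq_inv_mul _ _
  set d : 𝕜 := F y₀ with hd
  have hdpos : (0 : ℝ) < ‖d‖ := lt_of_le_of_lt (by linarith) hFy₀
  have hd0 : d ≠ 0 := norm_pos_iff.mp hdpos
  set y : X := ((‖d‖ : 𝕜) * d⁻¹) • y₀ with hydef
  have hy1 : ‖y‖ ≤ 1 := by
    rw [hydef, norm_smul, norm_mul, norm_inv, RCLike.norm_ofReal,
      abs_of_nonneg (norm_nonneg d), mul_inv_cancel₀ (ne_of_gt hdpos), hy₀norm, one_mul]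
  have hFy : F y = ((‖d‖ : ℝ) : 𝕜) := by
    rw [hydef, map_smul, smul_eq_mul, ← hd]
    field_simp
  have happ : F y = ∑ k ∈ Finset.range m, (starRingEnd 𝕜) (σ k) * e k y := by
    rw [hF, ContinuousLinearMap.sum_apply]
    exact Finset.sum_congr rfl fun k _ => by
      rw [ContinuousLinearMap.smul_apply, smul_eq_mul]
  have hsum : ∑ k ∈ Finset.range m, RCLike.re ((starRingEnd 𝕜) (σ k) * e k y) = ‖d‖ := by
    rw [← map_sum, ← happ, hFy, RCLike.ofReal_re]
  have hterm_le : ∀ k, k < m → RCLike.re ((starRingEnd 𝕜) (σ k) * e k y) ≤ 1 := by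
    intro k hk
    calc RCLike.re ((starRingEnd 𝕜) (σ k) * e k y) ≤ ‖(starRingEnd 𝕜) (σ k) * e k y‖ :=
      RCLike.re_le_norm _
    _ = ‖σ k‖ * ‖e k y‖ := by rw [norm_mul, RCLike.norm_conj]
    _ ≤ 1 * (‖e k‖ * ‖y‖) := by
        rw [hσ k hk, one_mul, one_mul]; exact (e k).le_opNorm y
    _ ≤ 1 := by rw [one_mul, norm_e e he k, one_mul]; exact hy1
  have hterm_ge : ∀ k, k < m → 1 - ε' ≤ RCLike.re ((starRingEnd 𝕜) (σ k) * e k y) := by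
    intro k hk
    have h3 := Finset.sum_erase_add (Finset.range m)
      (fun k => RCLike.re ((starRingEnd 𝕜) (σ k) * e k y)) (Finset.mem_range.mpr hk)
    have h4 : ∑ n ∈ (Finset.range m).erase k, RCLike.re ((starRingEnd 𝕜) (σ n) * e n y)
        ≤ (m : ℝ) - 1 := by
      calc ∑ n ∈ (Finset.range m).erase k, RCLike.re ((starRingEnd 𝕜) (σ n) * e n y)
          ≤ ∑ _n ∈ (Finset.range m).erase k, (1 : ℝ) :=
            Finset.sum_le_sum fun n hn =>
              hterm_le n (Finset.mem_range.mp (Finset.mem_of_mem_erase hn))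
      _ = ((Finset.range m).erase k).card := by simp
      _ = (m : ℝ) - 1 := by
          rw [Finset.card_erase_of_mem (Finset.mem_range.mpr hk), Finset.card_range]
          have : (1:ℕ) ≤ m := hm
          push_cast [this]
          ring
    have h5 : (m : ℝ) - ε' ≤ ∑ n ∈ Finset.range m, RCLike.re ((starRingEnd 𝕜) (σ n) * e n y) := by
      rw [hsum]; linarith
    linarith [h3, h4, h5]
  refine ⟨y, hy1, fun n hn => ?_⟩
  have hre : 1 - ε' ≤ RCLike.re ((starRingEnd 𝕜) (σ n) * e n y) := hterm_ge n hn
  have heny : ‖e n y‖ ≤ 1 := by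
    calc ‖e n y‖ ≤ ‖e n‖ * ‖y‖ := (e n).le_opNorm y
    _ ≤ 1 := by rw [norm_e e he n, one_mul]; exact hy1
  have hsq : ‖e n y - σ n‖ ^ 2 ≤ 2 * ε' := by
    letI : InnerProductSpace 𝕜 𝕜 := RCLike.innerProductSpace
    have h5 := norm_sub_sq (𝕜 := 𝕜) (e n y) (σ n)
    have h6 : RCLike.re (inner 𝕜 (e n y) (σ n) : 𝕜) = RCLike.re ((starRingEnd 𝕜) (σ n) * e n y) := by
      rw [RCLike.inner_apply', ← RCLike.conj_re (((starRingEnd 𝕜) (e n y)) * σ n), map_mul,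
        RingHomInvPair.comp_apply_eq₂, mul_comm]
    rw [h5, h6, hσ n hn]
    nlinarith [hre, heny, norm_nonneg (e n y), sq_nonneg (‖e n y‖ - 1)]
  have h2e : 2 * ε' = ε ^ 2 := by rw [hε'def]; ring
  rw [h2e] at hsq
  exact (pow_le_pow_iff_left₀ (norm_nonneg _) hε.le two_ne_zero).mp hsq

lemma approx_pattern (m : ℕ) (p : ℕ → 𝕜) (hp : ∀ n, p n = 0 ∨ p n = 1) :
    ∃ x : X, ‖x‖ ≤ 1 ∧ ∀ n < m, ‖e n x - p n‖ ≤ 1 / (m + 1) := by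
  have hεpos : (0 : ℝ) < 1 / (m + 1) := by positivity
  have hεle : (1 : ℝ) / (m + 1) ≤ 1 := by
    rw [div_le_one (by positivity)]
    have : (0:ℝ) ≤ m := Nat.cast_nonneg m
    linarith
  obtain ⟨y₁, hy₁n, hy₁⟩ := approx_unimodular e he m (fun _ => 1) (fun n _ => norm_one) hεpos hεle
  set σ : ℕ → 𝕜 := fun n => 2 * p n - 1 with hσdef
  have hσ1 : ∀ n < m, ‖σ n‖ = 1 := by
    intro n _
    rcases hp n with h | h
    · simp [hσdef, h]
    · simp only [hσdef, h]
      norm_num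
  obtain ⟨y₂, hy₂n, hy₂⟩ := approx_unimodular e he m σ hσ1 hεpos hεle
  refine ⟨(2 : 𝕜)⁻¹ • (y₁ + y₂), ?_, ?_⟩
  · rw [norm_smul, norm_inv]
    have h2 : ‖(2 : 𝕜)‖ = 2 := by norm_num
    rw [h2]
    calc (2 : ℝ)⁻¹ * ‖y₁ + y₂‖ ≤ 2⁻¹ * (‖y₁‖ + ‖y₂‖) := by
          gcongr; exact norm_add_le _ _
    _ ≤ 1 := by linarith
  · intro n hn
    have hkey : e n ((2 : 𝕜)⁻¹ • (y₁ + y₂)) - p n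
        = (2 : 𝕜)⁻¹ * ((e n y₁ - 1) + (e n y₂ - σ n)) := by
      rw [map_smul, map_add, smul_eq_mul, hσdef]
      ring
    rw [hkey, norm_mul, norm_inv]
    have h2 : ‖(2 : 𝕜)‖ = 2 := by norm_num
    rw [h2]
    calc (2:ℝ)⁻¹ * ‖(e n y₁ - 1) + (e n y₂ - σ n)‖
        ≤ 2⁻¹ * (‖e n y₁ - 1‖ + ‖e n y₂ - σ n‖) := by gcongr; exact norm_add_le _ _
    _ ≤ 2⁻¹ * (1 / (m + 1) + 1 / (m + 1)) := by
          have := hy₁ n hn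
          have := hy₂ n hn
          gcongr <;> assumption
    _ = 1 / (m + 1) := by ring

end Approx
end UltraAux

set_option maxHeartbeats 1000000 in
/-- Let `𝕜` be `ℝ` or `ℂ` and let `X` be an infinite-dimensional normed
space over `𝕜` whose dual contains an isometric copy of `ℓ¹`.  Then the canonical linear
isometry `j : (X*)^𝒰 → (X^𝒰)*` is not surjective. -/
theorem canonical_map_not_surjective
    (𝒰 : Ultrafilter ℕ) (h𝒰 : (𝒰 : Filter ℕ) ≤ Filter.cofinite)
    {𝕜 : Type*} [RCLike 𝕜] (X : Type*) [NormedAddCommGroup X] [NormedSpace 𝕜 X]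
    (hdim : ¬ FiniteDimensional 𝕜 X)
    (e : ℕ → StrongDual 𝕜 X)
    (he : ∀ (m : ℕ) (r : ℕ → 𝕜),
      ‖∑ n ∈ Finset.range m, r n • e n‖ = ∑ n ∈ Finset.range m, ‖r n‖) :
    ∃ φ : StrongDual 𝕜 (Ultrapower 𝕜 𝒰 X), ¬ InCanonicalImage 𝕜 𝒰 φ := by
  classical
  have hen : ∀ n, ‖e n‖ = 1 := UltraAux.norm_e e he
  set pat : ℕ → ℕ → 𝕜 := fun r n => if n < r then 0 else 1 with hpat
  have hp : ∀ r n, pat r n = 0 ∨ pat r n = 1 := fun r n => by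
    by_cases h : n < r <;> simp [hpat, h]
  choose Xv hXv1 hXv2 using fun (r m : ℕ) => UltraAux.approx_pattern e he m (pat r) (hp r)
  refine ⟨UltraAux.phi 𝒰 e hen, ?_⟩
  rintro ⟨f, -, hf⟩
  have hUatTop : (𝒰 : Filter ℕ) ≤ atTop := by rw [← Nat.cofinite_eq_atTop]; exact h𝒰
  have hge : ∀ k : ℕ, ∀ᶠ m in (𝒰 : Filter ℕ), k ≤ m := fun k =>
    (eventually_ge_atTop k).filter_mono hUatTop
  have hinv : Tendsto (fun m : ℕ => 1 / ((m : ℝ) + 1)) (𝒰 : Filter ℕ) (𝓝 0) :=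
    tendsto_one_div_add_atTop_nhds_zero_nat.mono_left hUatTop
  have hbnd : ∀ (g : ℕ → 𝕜) (cc : 𝕜),
      (∀ᶠ m in (𝒰 : Filter ℕ), ‖g m - cc‖ ≤ 1 / ((m : ℝ) + 1)) →
      Tendsto g (𝒰 : Filter ℕ) (𝓝 cc) := by
    intro g cc h
    rw [tendsto_iff_norm_sub_tendsto_zero]
    exact squeeze_zero' (Filter.Eventually.of_forall fun m => norm_nonneg _) h hinv
  have hseq : ∀ r, Tendsto (fun m => f m (Xv r m)) (𝒰 : Filter ℕ) (𝓝 1) := by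
    intro r
    have ht : ∀ n, Tendsto (fun m => e n (Xv r m)) (𝒰 : Filter ℕ) (𝓝 (pat r n)) := by
      intro n
      apply hbnd
      filter_upwards [hge (n + 1)] with m hm
      exact hXv2 r m n (by omega)
    have htc : Tendsto (pat r) (𝒰 : Filter ℕ) (𝓝 1) := by
      have hev : ∀ᶠ n in (𝒰 : Filter ℕ), (1 : 𝕜) = pat r n := by
        filter_upwards [hge r] with n hn
        simp [hpat, Nat.not_lt.mpr hn]
      exact Tendsto.congr' hev tendsto_const_nhds
    have h0 := hf (UltraAux.mkB (fun m => Xv r m) fun m => hXv1 r m)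
    rw [UltraAux.phi_spec 𝒰 e hen _ _ (pat r) ht htc] at h0
    simpa using h0
  set c : ℕ → ℕ → ℝ := fun r m => RCLike.re (f m (Xv r m)) with hc
  have hcr : ∀ r, ∀ᶠ m in (𝒰 : Filter ℕ), 1 / 2 < c r m := by
    intro r
    have h1 : Tendsto (fun m => c r m) (𝒰 : Filter ℕ) (𝓝 1) := by
      have h2 := (RCLike.continuous_re.tendsto (1 : 𝕜)).comp (hseq r)
      simpa [hc, Function.comp_def] using h2
    exact h1.eventually (eventually_gt_nhds (by norm_num))
  set P : ℕ → ℕ → Prop := fun m r => ∀ r' ≤ r, 1 / 2 < c r' m with hP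
  set ρ : ℕ → ℕ := fun m => Nat.findGreatest (P m) m with hρ
  have hρ_spec : ∀ m, 1 / 2 < c 0 m → 1 / 2 < c (ρ m) m := by
    intro m h0
    have hP0 : P m 0 := by
      intro r' hr'
      have : r' = 0 := Nat.le_zero.mp hr'
      rw [this]; exact h0
    have h2 : P m (Nat.findGreatest (P m) m) := Nat.findGreatest_spec (Nat.zero_le m) hP0
    exact h2 (ρ m) (by rw [hρ])
  have hρ_infty : ∀ n, ∀ᶠ m in (𝒰 : Filter ℕ), n < ρ m := by
    intro n
    have hall : ∀ᶠ m in (𝒰 : Filter ℕ), ∀ r' ∈ Set.Iic (n + 1), 1 / 2 < c r' m :=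
      (Filter.eventually_all_finite (Set.finite_Iic (n + 1))).mpr fun r' _ => hcr r'
    filter_upwards [hall, hge (n + 1)] with m hm hm2
    have hPn : P m (n + 1) := fun r' hr' => hm r' hr'
    have h3 := Nat.le_findGreatest hm2 hPn
    show n < Nat.findGreatest (P m) m
    omega
  have htd : ∀ n, Tendsto (fun m => e n (Xv (ρ m) m)) (𝒰 : Filter ℕ) (𝓝 0) := by
    intro n
    apply hbnd
    filter_upwards [hρ_infty n, hge (n + 1)] with m h1 h2
    have h3 := hXv2 (ρ m) m n (by omega)
    rw [sub_zero]
    have h4 : pat (ρ m) n = 0 := by simp [hpat, h1]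
    rwa [h4, sub_zero] at h3
  have hdiag := hf (UltraAux.mkB (fun m => Xv (ρ m) m) fun m => hXv1 _ m)
  rw [UltraAux.phi_spec 𝒰 e hen _ _ (fun _ => 0) htd tendsto_const_nhds] at hdiag
  have hlt : ∀ᶠ m in (𝒰 : Filter ℕ), c (ρ m) m < 1 / 2 := by
    have h1 : Tendsto (fun m => c (ρ m) m) (𝒰 : Filter ℕ) (𝓝 0) := by
      have h2 := (RCLike.continuous_re.tendsto (0 : 𝕜)).comp hdiag
      simpa [hc, Function.comp_def] using h2
    exact h1.eventually (eventually_lt_nhds (by norm_num))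
  obtain ⟨m, hm1, hm2⟩ := ((hcr 0).and hlt).exists
  exact absurd (hρ_spec m hm1) (not_lt.mpr hm2.le)
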